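/- Let f : A ⥤ B be a functor and let μ_A : d₀ ⟶ d₁ be the canonical natural transformation on the arrow category A ↓ A. The identee of f—that is, the universal pair (K, κ) of a category K with a natural transformation κ between two functors K ⥤ A such that f κ is an identity—is given by the full subcategory K of A ↓ A on arrows α with f α an identity, together with the restriction of μ_A to K. -/

import Mathlib

open CategoryTheory

universe v₁ v₂ v₃ u₁ u₂ u₃

variable {A : Type u₁} {B : Type u₂} [Category.{v₁} A] [Category.{v₂} B]

/-- The full subcategory of the arrow category of `A` on the `f`-vertical arrows. -/
def Identee (f : A ⥤ B) : Type max u₁ v₁ :=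
  ObjectProperty.FullSubcategory (fun α : Arrow A =>
    ∃ h : f.obj α.left = f.obj α.right, f.map α.hom = eqToHom h)

instance (f : A ⥤ B) : Category (Identee f) :=
  ObjectProperty.FullSubcategory.category _

/-- Domain projection `k₀ : K ⥤ A`. -/
def identeeK₀ (f : A ⥤ B) : Identee f ⥤ A :=
  ObjectProperty.ι _ ⋙ Arrow.leftFunc

/-- Codomain projection `k₁ : K ⥤ A`. -/
def identeeK₁ (f : A ⥤ B) : Identee f ⥤ A :=
  ObjectProperty.ι _ ⋙ Arrow.rightFunc

/-- The restriction of `μ_A` to the `f`-vertical arrows. -/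
def identeeKappa (f : A ⥤ B) : identeeK₀ f ⟶ identeeK₁ f where
  app α := α.obj.hom
  naturality _ _ u := u.hom.w

theorem arrowObjExt {a b : Arrow A} (hl : a.left = b.left) (hr : a.right = b.right)
    (hh : a.hom = eqToHom hl ≫ b.hom ≫ eqToHom hr.symm) : a = b := by
  obtain ⟨al, ar, ah⟩ := a
  obtain ⟨bl, br, bh⟩ := b
  dsimp only [Arrow.left, Arrow.right, Arrow.hom] at hl hr hh
  subst hl; subst hr
  simp only [eqToHom_refl, Category.comp_id, Category.id_comp] at hh
  subst hh; rfl

theorem identeeFunctorExt (f : A ⥤ B) {X : Type u₃} [Category.{v₃} X]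
    (t s : X ⥤ Identee f)
    (he : t ⋙ ObjectProperty.ι _ = s ⋙ ObjectProperty.ι _) : t = s := by
  have hobj : ∀ x, t.obj x = s.obj x := fun x =>
    ObjectProperty.FullSubcategory.ext (Functor.congr_obj he x)
  refine CategoryTheory.Functor.ext hobj (fun x y u => ?_)
  apply ObjectProperty.hom_ext
  have h2 := Functor.congr_hom he u
  have e1 : (eqToHom (hobj x) : t.obj x ⟶ s.obj x).hom
      = eqToHom (Functor.congr_obj he x) := by
    have := eqToHom_map (ObjectProperty.ι
      (fun α : Arrow A => ∃ h : f.obj α.left = f.obj α.right, f.map α.hom = eqToHom h)) (hobj x)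
    exact this
  have e2 : (eqToHom (hobj y).symm : s.obj y ⟶ t.obj y).hom
      = eqToHom (Functor.congr_obj he y).symm := by
    have := eqToHom_map (ObjectProperty.ι
      (fun α : Arrow A => ∃ h : f.obj α.left = f.obj α.right, f.map α.hom = eqToHom h)) (hobj y).symm
    exact this
  refine h2.trans ?_
  rw [← e1, ← e2]
  rfl


@[simp] theorem arrowEqToHomLeft {a b : Arrow A} (h : a = b) :
    (eqToHom h).left = eqToHom (congrArg Comma.left h) := by subst h; rfl

@[simp] theorem arrowEqToHomRight {a b : Arrow A} (h : a = b) :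
    (eqToHom h).right = eqToHom (congrArg Comma.right h) := by subst h; rfl


def identeeLift (f : A ⥤ B) {X : Type u₃} [Category.{v₃} X] (g h : X ⥤ A) (σ : g ⟶ h)
    (key : ∀ x : X, ∃ e : f.obj (g.obj x) = f.obj (h.obj x), f.map (σ.app x) = eqToHom e) :
    X ⥤ Identee f where
  obj x := ⟨Arrow.mk (σ.app x), key x⟩
  map {x y} u := ObjectProperty.homMk (Arrow.homMk (u := g.map u) (v := h.map u) (σ.naturality u))
  map_id x := by apply ObjectProperty.hom_ext; apply CommaMorphism.ext <;> simp [Arrow.homMk] <;> rfl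
  map_comp u v := by apply ObjectProperty.hom_ext; apply CommaMorphism.ext <;> simp [Arrow.homMk] <;> rfl

/-- The identee of `f : A ⥤ B` is the full subcategory `K` of the arrow category of `A` on the
arrows sent by `f` to identities, with the restriction `κ` of `μ_A`: the whiskering of `κ` with
`f` is an identity, and every natural transformation `σ` between functors `X ⥤ A` whose image
under `f` is an identity arises from `κ` by whiskering with a unique functor `X ⥤ K`. -/
theorem stmt16 (f : A ⥤ B) :
    (∃ w : identeeK₀ f ⋙ f = identeeK₁ f ⋙ f,
      Functor.whiskerRight (identeeKappa f) f = eqToHom w) ∧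
    ∀ {X : Type u₃} [Category.{v₃} X] (g h : X ⥤ A) (σ : g ⟶ h),
      (∃ wσ : g ⋙ f = h ⋙ f, Functor.whiskerRight σ f = eqToHom wσ) →
      ∃! t : X ⥤ Identee f,
        ∃ (e₁ : g = t ⋙ identeeK₀ f) (e₂ : t ⋙ identeeK₁ f = h),
          σ = eqToHom e₁ ≫ Functor.whiskerLeft t (identeeKappa f) ≫ eqToHom e₂ := by
  constructor
  · have w : identeeK₀ f ⋙ f = identeeK₁ f ⋙ f := by
      refine CategoryTheory.Functor.ext (fun α => α.property.1) ?_
      intro α β u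
      have h₁ := α.property.2
      have h₂ := β.property.2
      have hw := u.hom.w
      dsimp [identeeK₀, identeeK₁] at *
      calc f.map u.hom.left = f.map u.hom.left ≫ f.map β.obj.hom ≫ eqToHom β.property.1.symm := by
            rw [h₂]; simp
        _ = eqToHom α.property.1 ≫ f.map u.hom.right ≫ eqToHom β.property.1.symm := by
            rw [← Category.assoc, ← Functor.map_comp, hw, Functor.map_comp, h₁, Category.assoc]
    refine ⟨w, ?_⟩
    ext α
    have := α.property.2
    simp [identeeKappa, eqToHom_app]
    exact this
  · intro X _ g h σ ⟨wσ, hwσ⟩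
    have key : ∀ x : X, ∃ e : f.obj (g.obj x) = f.obj (h.obj x), f.map (σ.app x) = eqToHom e := by
      intro x
      refine ⟨Functor.congr_obj wσ x, ?_⟩
      have := congrArg (fun τ => NatTrans.app τ x) hwσ
      simpa [eqToHom_app] using this
    refine ⟨identeeLift f g h σ key, ⟨rfl, rfl, ?_⟩, ?_⟩
    · ext x
      simp [identeeKappa, identeeLift, eqToHom_app]
      show σ.app x = 𝟙 _ ≫ σ.app x ≫ 𝟙 _
      simp
    · rintro t ⟨e₁, e₂, hσ⟩
      have hobjl : ∀ x, (t.obj x).obj.left = g.obj x := fun x =>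
        (Functor.congr_obj e₁ x).symm
      have hobjr : ∀ x, (t.obj x).obj.right = h.obj x := fun x =>
        Functor.congr_obj e₂ x
      have happ : ∀ x, σ.app x
          = eqToHom (hobjl x).symm ≫ (t.obj x).obj.hom ≫ eqToHom (hobjr x) := by
        intro x
        have := congrArg (fun τ => NatTrans.app τ x) hσ
        simp [eqToHom_app, identeeKappa] at this
        exact this
      apply identeeFunctorExt
      have hobj : ∀ x, (t ⋙ ObjectProperty.ι _).obj x = Arrow.mk (σ.app x) := by
        intro x
        refine arrowObjExt (hobjl x) (hobjr x) ?_
        rw [happ x]; simp; rfl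
      refine CategoryTheory.Functor.ext hobj (fun x y u => ?_)
      have hl : (t.map u).hom.left = eqToHom (hobjl x) ≫ g.map u ≫ eqToHom (hobjl y).symm := by
        have := Functor.congr_hom e₁.symm u
        exact this
      have hr : (t.map u).hom.right = eqToHom (hobjr x) ≫ h.map u ≫ eqToHom (hobjr y).symm := by
        have := Functor.congr_hom e₂ u
        dsimp [identeeK₁] at this
        exact this
      apply CommaMorphism.ext
      · change (t.map u).hom.left = (eqToHom (hobj x)).left ≫ g.map u ≫ (eqToHom (hobj y).symm).left
        simpa [identeeLift, arrowEqToHomLeft] using hl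
      · change (t.map u).hom.right = (eqToHom (hobj x)).right ≫ h.map u ≫ (eqToHom (hobj y).symm).right
        simpa [identeeLift, arrowEqToHomRight] using hr
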